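/- Let ε ∈ (0,1) and δ > 0 and c > 0 be real constants. Consider the Erdős–Rényi random graph G on vertex set Fin n, given by independent Bernoulli(p) indicator random variables for each unordered pair of distinct vertices, with p = c·(ln n)/n^{1-ε}. Fix a vertex x. Then for all sufficiently large n, with probability at least 1 - 1/n^3, for every integer i ≥ 1 the graph-distance sphere Γ_i(x) = {y : dist_G(x,y) = i} satisfies |Γ_i(x)| ≤ (1+δ)·(np)^i, and the ball N_i(x) = {y : dist_G(x,y) ≤ i} satisfies |N_i(x)| ≤ (1+2δ)·(np)^i. -/

import Mathlib

open MeasureTheory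

/-- The Erdős–Rényi random graph on `Fin n` determined by a family of edge indicators
`ω : Sym2 (Fin n) → Bool`: distinct vertices `u, v` are adjacent iff `ω s(u, v) = true`. -/
def erdosRenyiGraph (n : ℕ) (ω : Sym2 (Fin n) → Bool) : SimpleGraph (Fin n) where
  Adj u v := u ≠ v ∧ ω s(u, v) = true
  symm := by
    refine ⟨fun u v h => ?_⟩
    exact ⟨h.1.symm, by rw [Sym2.eq_swap]; exact h.2⟩
  loopless := by
    refine ⟨fun u h => ?_⟩
    exact h.1 rfl

open MeasureTheory Finset Real

section chernoff
variable {ι : Type*} [Fintype ι] [DecidableEq ι]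

noncomputable def wB (p : ℝ) : Bool → ℝ := fun b => if b then p else 1 - p

lemma wB_nonneg {p : ℝ} (h0 : 0 ≤ p) (h1 : p ≤ 1) (b : Bool) : 0 ≤ wB p b := by
  cases b <;> simp [wB] <;> linarith

lemma chernoff_core {p lam t : ℝ} (h0 : 0 ≤ p) (h1 : p ≤ 1) (hlam : 0 ≤ lam) (F : Finset ι) :
    ∑ ω ∈ (Set.toFinite {ω : ι → Bool | t ≤ ∑ e ∈ F, (if ω e then (1:ℝ) else 0)}).toFinset,
        ∏ e, wB p (ω e)
      ≤ exp (-(lam * t)) * (1 + p * (exp lam - 1)) ^ F.card := by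
  classical
  set X : (ι → Bool) → ℝ := fun ω => ∑ e ∈ F, (if ω e then (1:ℝ) else 0) with hX
  have hprod_nonneg : ∀ ω : ι → Bool, 0 ≤ ∏ e, wB p (ω e) := fun ω =>
    Finset.prod_nonneg fun e _ => wB_nonneg h0 h1 _
  have step1 : ∑ ω ∈ (Set.toFinite {ω : ι → Bool | t ≤ X ω}).toFinset, ∏ e, wB p (ω e)
      ≤ ∑ ω : ι → Bool, exp (lam * (X ω - t)) * ∏ e, wB p (ω e) := by
    refine le_trans (Finset.sum_le_sum fun ω hω => ?_)
      (Finset.sum_le_sum_of_subset_of_nonneg (Finset.subset_univ _) fun ω _ _ => ?_)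
    · have hmem : t ≤ X ω := by simpa using hω
      have h1e : (1:ℝ) ≤ exp (lam * (X ω - t)) := by
        rw [← Real.exp_zero]; exact Real.exp_le_exp.mpr (by nlinarith)
      nlinarith [hprod_nonneg ω, h1e]
    · exact mul_nonneg (Real.exp_nonneg _) (hprod_nonneg ω)
  set h : ι → Bool → ℝ :=
    fun e b => (if e ∈ F then exp (lam * (if b then (1:ℝ) else 0)) else 1) * wB p b with hh
  have hfac : ∀ ω : ι → Bool, exp (lam * (X ω - t)) * ∏ e, wB p (ω e)
      = exp (-(lam*t)) * ∏ e, h e (ω e) := by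
    intro ω
    have h2 : (∏ e, (if e ∈ F then exp (lam * (if ω e then (1:ℝ) else 0)) else 1))
        = exp (lam * X ω) := by
      rw [Finset.prod_ite_mem, Finset.univ_inter, hX]
      rw [Finset.mul_sum, Real.exp_sum]
    simp only [hh, Finset.prod_mul_distrib, h2]
    rw [mul_sub, sub_eq_add_neg, Real.exp_add, mul_comm (exp (lam * X ω))]
    ring
  have key : ∑ ω : ι → Bool, exp (lam * (X ω - t)) * ∏ e, wB p (ω e)
      = exp (-(lam * t)) * (1 + p * (exp lam - 1)) ^ F.card := by
    simp_rw [hfac]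
    rw [← Finset.mul_sum]
    congr 1
    have hpi : ∑ ω : ι → Bool, ∏ e, h e (ω e) = ∏ e, ∑ b, h e b := by
      have := Finset.prod_univ_sum (fun _ : ι => (univ : Finset Bool)) h
      rw [Fintype.piFinset_univ] at this
      exact this.symm
    rw [hpi]
    have hsum : ∀ e : ι, ∑ b, h e b = if e ∈ F then 1 + p * (exp lam - 1) else 1 := by
      intro e
      rw [Fintype.sum_bool]
      by_cases he : e ∈ F <;> simp [hh, he, wB] <;> ring
    simp_rw [hsum]
    rw [Finset.prod_ite_mem, Finset.univ_inter, Finset.prod_const]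
  exact step1.trans_eq key

lemma chernoff_tail {p d ν : ℝ} (h0 : 0 ≤ p) (h1 : p ≤ 1) (hd0 : 0 < d) (hd1 : d ≤ 1)
    (hν : 0 ≤ ν) (F : Finset ι) (hm : (F.card : ℝ) * p ≤ ν) :
    ∑ ω ∈ (Set.toFinite {ω : ι → Bool |
          (1+d)*ν ≤ ∑ e ∈ F, (if ω e then (1:ℝ) else 0)}).toFinset,
        ∏ e, wB p (ω e)
      ≤ exp (-(5/16 * (d^2 * ν))) := by
  refine (chernoff_core h0 h1 (by linarith : (0:ℝ) ≤ d/2) F).trans ?_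
  set lam := d/2 with hlamdef
  have hexp : exp lam ≤ 1 + lam + lam^2 * (3/4) := by
    have h := Real.exp_bound' (x := lam) (by linarith) (by linarith) (n := 2) (by norm_num)
    norm_num [Finset.sum_range_succ] at h
    linarith
  have he1 : 1 ≤ exp lam := by
    rw [← Real.exp_zero]; exact Real.exp_le_exp.mpr (by linarith)
  have hb : (1 + p * (exp lam - 1)) ^ F.card ≤ exp (ν * (exp lam - 1)) := by
    calc (1 + p * (exp lam - 1)) ^ F.card ≤ exp (p * (exp lam - 1)) ^ F.card := by
          apply pow_le_pow_left₀ (by nlinarith)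
          linarith [Real.add_one_le_exp (p * (exp lam - 1))]
      _ = exp ((F.card : ℝ) * (p * (exp lam - 1))) := by rw [← Real.exp_nat_mul]
      _ ≤ exp (ν * (exp lam - 1)) := Real.exp_le_exp.mpr (by nlinarith)
  calc exp (-(lam * ((1+d)*ν))) * (1 + p * (exp lam - 1)) ^ F.card
      ≤ exp (-(lam * ((1+d)*ν))) * exp (ν * (exp lam - 1)) :=
        mul_le_mul_of_nonneg_left hb (Real.exp_nonneg _)
    _ = exp (ν * (exp lam - 1) - lam * ((1+d)*ν)) := by rw [← Real.exp_add]; ring_nf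
    _ ≤ exp (-(5/16 * (d^2 * ν))) := by
        apply Real.exp_le_exp.mpr
        have h2 : ν * (exp lam - 1) ≤ ν * (lam + lam^2 * (3/4)) :=
          mul_le_mul_of_nonneg_left (by linarith) hν
        rw [hlamdef] at h2 ⊢
        nlinarith [h2]

end chernoff


section measureSum
variable {ι : Type*} [Fintype ι] [DecidableEq ι]

lemma measure_pi_bernoulli_singleton {p : ℝ} (h0 : 0 ≤ p) (h1 : p ≤ 1)
    (hp : ENNReal.ofReal p ≤ 1) (ω : ι → Bool) :
    (Measure.pi fun _ : ι => (PMF.bernoulli (Real.toNNReal p) (ENNReal.coe_le_one_iff.mp hp)).toMeasure) {ω}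
      = ENNReal.ofReal (∏ e, wB p (ω e)) := by
  have h1 : ({ω} : Set (ι → Bool)) = Set.pi Set.univ (fun e => {ω e}) :=
    (Set.univ_pi_singleton ω).symm
  rw [h1, Measure.pi_pi]
  have : ∀ e : ι, (PMF.bernoulli (Real.toNNReal p) (ENNReal.coe_le_one_iff.mp hp)).toMeasure {ω e}
      = ENNReal.ofReal (wB p (ω e)) := by
    intro e
    rw [PMF.toMeasure_apply_singleton _ _ (measurableSet_singleton _), PMF.bernoulli_apply]
    cases ω e
    · simp [wB, ENNReal.ofReal_sub _ h0]; rfl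
    · simp [wB]; rfl
  simp_rw [this]
  rw [← ENNReal.ofReal_prod_of_nonneg]
  intro e _
  exact wB_nonneg h0 ‹p ≤ 1› _

lemma measure_pi_bernoulli_apply {p : ℝ} (h0 : 0 ≤ p) (h1 : p ≤ 1)
    (hp : ENNReal.ofReal p ≤ 1) (A : Set (ι → Bool)) :
    (Measure.pi fun _ : ι => (PMF.bernoulli (Real.toNNReal p) (ENNReal.coe_le_one_iff.mp hp)).toMeasure) A
      = ∑ ω ∈ (Set.toFinite A).toFinset, ENNReal.ofReal (∏ e, wB p (ω e)) := by
  classical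
  set μ := (Measure.pi fun _ : ι => (PMF.bernoulli (Real.toNNReal p) (ENNReal.coe_le_one_iff.mp hp)).toMeasure)
  have hA : A = ⋃ ω ∈ (Set.toFinite A).toFinset, ({ω} : Set (ι → Bool)) := by
    ext y
    rw [Set.mem_iUnion₂]
    simp only [Set.Finite.mem_toFinset, Set.mem_singleton_iff]
    exact ⟨fun h => ⟨y, h, rfl⟩, fun ⟨z, hz, hyz⟩ => hyz ▸ hz⟩
  have hd : Set.PairwiseDisjoint ((Set.toFinite A).toFinset : Set (ι → Bool))
      (fun ω => ({ω} : Set (ι → Bool))) := by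
    intro a _ b _ hab
    simp [Set.disjoint_singleton, hab]
  have hm : ∀ b ∈ (Set.toFinite A).toFinset, MeasurableSet ({b} : Set (ι → Bool)) :=
    fun b _ => measurableSet_singleton b
  conv_lhs => rw [hA]
  rw [measure_biUnion_finset hd hm]
  exact Finset.sum_congr rfl fun ω _ => measure_pi_bernoulli_singleton h0 h1 hp ω

end measureSum




lemma exists_pred {V : Type*} (G : SimpleGraph V) (x y : V) (i : ℕ)
    (h : G.edist x y = ((i+1 : ℕ) : ℕ∞)) : ∃ z, G.Adj z y ∧ G.edist x z = (i : ℕ∞) := by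
  obtain ⟨w, hw⟩ := SimpleGraph.exists_walk_of_edist_eq_coe h
  have hne : y ≠ x := by
    rintro rfl
    rw [SimpleGraph.edist_self] at h
    exact absurd h.symm (by exact_mod_cast Nat.succ_ne_zero i)
  obtain ⟨z, hadj, q, hq⟩ := SimpleGraph.Walk.exists_eq_cons_of_ne hne w.reverse
  refine ⟨z, hadj.symm, ?_⟩
  have hql : q.length = i := by
    have := congrArg SimpleGraph.Walk.length hq
    rw [SimpleGraph.Walk.length_reverse, hw, SimpleGraph.Walk.length_cons] at this
    omega
  have hle : G.edist x z ≤ (i : ℕ∞) := by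
    have := SimpleGraph.edist_le q.reverse
    rwa [SimpleGraph.Walk.length_reverse, hql] at this
  have hzy : G.edist z y = 1 := SimpleGraph.edist_eq_one_iff_adj.mpr hadj.symm
  have hge : (i : ℕ∞) ≤ G.edist x z := by
    have htri := SimpleGraph.edist_triangle (G := G) (u := x) (v := z) (w := y)
    rw [h, hzy] at htri
    have hcast : ((i+1 : ℕ) : ℕ∞) = (i : ℕ∞) + 1 := by push_cast; rfl
    rw [hcast] at htri
    exact (WithTop.add_le_add_iff_right (by simp : (1:ℕ∞) ≠ ⊤)).mp htri
  exact le_antisymm hle hge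

open scoped Classical in
noncomputable def cutF (n : ℕ) (S : Finset (Fin n)) : Finset (Sym2 (Fin n)) :=
  Finset.univ.filter (fun e => ∃ a b : Fin n, e = s(a,b) ∧ a ∈ S ∧ b ∉ S)

lemma cutF_card_le (n : ℕ) (S : Finset (Fin n)) : (cutF n S).card ≤ S.card * n := by
  classical
  have hsub : cutF n S ⊆ (S ×ˢ Finset.univ).image (fun p => s(p.1, p.2)) := by
    intro e he
    simp only [cutF, Finset.mem_filter] at he
    obtain ⟨-, a, b, rfl, ha, -⟩ := he
    exact Finset.mem_image.mpr ⟨(a, b), Finset.mem_product.mpr ⟨ha, Finset.mem_univ b⟩, rfl⟩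
  calc (cutF n S).card ≤ _ := Finset.card_le_card hsub
    _ ≤ (S ×ˢ Finset.univ).card := Finset.card_image_le
    _ = S.card * n := by rw [Finset.card_product, Finset.card_univ, Fintype.card_fin]

lemma sphere_bound {n : ℕ} (ω : Sym2 (Fin n) → Bool) (x : Fin n) {d np : ℝ}
    (hd : 0 ≤ d) (hnp : 0 ≤ np)
    (hA : ∀ S : Finset (Fin n), S.Nonempty →
      (((cutF n S).filter (fun e => ω e = true)).card : ℝ) ≤ (1+d) * S.card * np) :
    ∀ i : ℕ,
      (({y : Fin n | (erdosRenyiGraph n ω).edist x y = (i : ℕ∞)} : Set (Fin n)).ncard : ℝ)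
        ≤ ((1+d) * np) ^ i := by
  classical
  intro i
  induction i with
  | zero =>
    have h0 : ({y : Fin n | (erdosRenyiGraph n ω).edist x y = ((0:ℕ) : ℕ∞)} : Set (Fin n))
        = {x} := by
      ext y
      simp only [Set.mem_setOf_eq, Nat.cast_zero, SimpleGraph.edist_eq_zero_iff,
        Set.mem_singleton_iff]
      exact eq_comm
    rw [h0]
    simp
  | succ i ih =>
    set G := erdosRenyiGraph n ω with hG
    by_cases hne : ({y : Fin n | G.edist x y = ((i+1 : ℕ) : ℕ∞)} : Set (Fin n)).Nonempty
    case neg =>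
      rw [Set.not_nonempty_iff_eq_empty] at hne
      rw [hne]
      simp only [Set.ncard_empty, Nat.cast_zero]
      positivity
    case pos =>
    set Γp : Set (Fin n) := {y | G.edist x y = (i : ℕ∞)} with hΓp
    set S : Finset (Fin n) := (Set.toFinite Γp).toFinset with hS
    have hcardS : (S.card : ℝ) = (Γp.ncard : ℝ) := by
      rw [Set.ncard_eq_toFinset_card Γp]
    set T : Finset (Sym2 (Fin n)) := (cutF n S).filter (fun e => ω e = true) with hT
    set f : Fin n → Sym2 (Fin n) := fun y =>
      if hy : G.edist x y = ((i+1 : ℕ) : ℕ∞) then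
        s(Classical.choose (exists_pred G x y i hy), y) else s(y, y) with hf
    have hmemS : ∀ z : Fin n, z ∈ S ↔ G.edist x z = (i : ℕ∞) := by
      intro z
      rw [hS, Set.Finite.mem_toFinset, hΓp]
      rfl
    have hnotmem : ∀ y : Fin n, G.edist x y = ((i+1 : ℕ) : ℕ∞) → y ∉ S := by
      intro y hy hyS
      rw [hmemS] at hyS
      rw [hyS] at hy
      exact absurd (Nat.cast_injective hy) (by omega)
    have hmaps : ∀ y ∈ ({y : Fin n | G.edist x y = ((i+1 : ℕ) : ℕ∞)} : Set (Fin n)),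
        f y ∈ (T : Set (Sym2 (Fin n))) := by
      intro y hy
      have hy' : G.edist x y = ((i+1 : ℕ) : ℕ∞) := hy
      obtain ⟨hadj, hdist⟩ := Classical.choose_spec (exists_pred G x y i hy')
      set z := Classical.choose (exists_pred G x y i hy')
      have hfy : f y = s(z, y) := by rw [hf]; exact dif_pos hy'
      rw [hfy, Finset.mem_coe, hT, Finset.mem_filter]
      refine ⟨?_, hadj.2⟩
      rw [cutF, Finset.mem_filter]
      exact ⟨Finset.mem_univ _, z, y, rfl, (hmemS z).mpr hdist, hnotmem y hy'⟩
    have hinj : Set.InjOn f ({y : Fin n | G.edist x y = ((i+1 : ℕ) : ℕ∞)} : Set (Fin n)) := by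
      intro y1 h1 y2 h2 hfeq
      have h1' : G.edist x y1 = ((i+1 : ℕ) : ℕ∞) := h1
      have h2' : G.edist x y2 = ((i+1 : ℕ) : ℕ∞) := h2
      obtain ⟨hadj1, hdist1⟩ := Classical.choose_spec (exists_pred G x y1 i h1')
      obtain ⟨hadj2, hdist2⟩ := Classical.choose_spec (exists_pred G x y2 i h2')
      rw [hf] at hfeq
      simp only [dif_pos h1', dif_pos h2'] at hfeq
      rcases Sym2.eq_iff.mp hfeq with ⟨-, h⟩ | ⟨h, -⟩
      · exact h
      · exfalso
        rw [h, h2'] at hdist1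
        exact absurd (Nat.cast_injective hdist1) (by omega)
    have hle1 : (({y : Fin n | G.edist x y = ((i+1 : ℕ) : ℕ∞)} : Set (Fin n)).ncard : ℝ)
        ≤ (T.card : ℝ) := by
      have := Set.ncard_le_ncard_of_injOn f hmaps hinj (T : Set (Sym2 (Fin n))).toFinite
      rw [Set.ncard_coe_finset] at this
      exact_mod_cast this
    have hSne : S.Nonempty := by
      obtain ⟨y, hy⟩ := hne
      have hy' : G.edist x y = ((i+1 : ℕ) : ℕ∞) := hy
      obtain ⟨hadj, hdist⟩ := Classical.choose_spec (exists_pred G x y i hy')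
      exact ⟨_, (hmemS _).mpr hdist⟩
    have hle2 : (T.card : ℝ) ≤ (1+d) * S.card * np := hA S hSne
    have hfin : ((1+d) * (Γp.ncard : ℝ)) * np ≤ ((1+d) * np) ^ (i+1) := by
      rw [pow_succ]
      have h1d : (0:ℝ) ≤ 1 + d := by linarith
      have := mul_le_mul_of_nonneg_left ih h1d
      nlinarith [this, (Nat.cast_nonneg Γp.ncard : (0:ℝ) ≤ (Γp.ncard : ℝ)), hnp, pow_nonneg (mul_nonneg h1d hnp) i]
    calc (({y : Fin n | G.edist x y = ((i+1 : ℕ) : ℕ∞)} : Set (Fin n)).ncard : ℝ)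
        ≤ (T.card : ℝ) := hle1
      _ ≤ (1+d) * S.card * np := hle2
      _ = ((1+d) * (Γp.ncard : ℝ)) * np := by rw [hcardS]
      _ ≤ ((1+d) * np) ^ (i+1) := hfin

lemma ball_ncard_le {V : Type*} [Fintype V] (G : SimpleGraph V) (x : V) (i : ℕ) :
    ({y : V | G.edist x y ≤ (i : ℕ∞)} : Set V).ncard
      ≤ ∑ j ∈ Finset.range (i+1), ({y : V | G.edist x y = (j : ℕ∞)} : Set V).ncard := by
  induction i with
  | zero =>
    rw [Finset.sum_range_one]
    apply le_of_eq
    congr 1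
    ext y
    simp [nonpos_iff_eq_zero]
  | succ i ih =>
    have hsub : ({y : V | G.edist x y ≤ ((i+1 : ℕ) : ℕ∞)} : Set V)
        ⊆ ({y : V | G.edist x y ≤ (i : ℕ∞)} : Set V)
          ∪ ({y : V | G.edist x y = ((i+1 : ℕ) : ℕ∞)} : Set V) := by
      intro y hy
      have hy' : G.edist x y ≤ ((i+1 : ℕ) : ℕ∞) := hy
      have hnt : G.edist x y ≠ ⊤ := ne_top_of_le_ne_top (by exact_mod_cast ENat.coe_ne_top (i+1)) hy'
      obtain ⟨k, hk⟩ := WithTop.ne_top_iff_exists.mp hnt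
      rw [← hk] at hy'
      have hk' : k ≤ i + 1 := by exact Nat.cast_le.mp (by exact_mod_cast hy')
      simp only [Set.mem_union, Set.mem_setOf_eq, ← hk]
      rcases Nat.lt_or_ge k (i+1) with h | h
      · left
        exact Nat.cast_le.mpr (Nat.lt_succ_iff.mp h)
      · right
        exact congrArg Nat.cast (le_antisymm hk' h)
    calc ({y : V | G.edist x y ≤ ((i+1 : ℕ) : ℕ∞)} : Set V).ncard
        ≤ (({y : V | G.edist x y ≤ (i : ℕ∞)} : Set V)
            ∪ ({y : V | G.edist x y = ((i+1 : ℕ) : ℕ∞)} : Set V)).ncard :=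
          Set.ncard_le_ncard hsub (Set.toFinite _)
      _ ≤ ({y : V | G.edist x y ≤ (i : ℕ∞)} : Set V).ncard
            + ({y : V | G.edist x y = ((i+1 : ℕ) : ℕ∞)} : Set V).ncard :=
          Set.ncard_union_le _ _
      _ ≤ _ := by
          rw [Finset.sum_range_succ]
          exact Nat.add_le_add_right ih _


set_option maxHeartbeats 2000000 in
/-- BFS-tree balance (Lemma `BFS-tree-upper-bound`): in `G(n, p)` with
`p = c·(ln n)/n^{1-ε}`, for all sufficiently large `n` and any fixed vertex `x`, with
probability at least `1 - 1/n^3`, for every `i ≥ 1` the distance sphere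
`Γ_i(x) = {y : dist(x,y) = i}` has size at most `(1+δ)·(np)^i` and the ball
`N_i(x) = {y : dist(x,y) ≤ i}` has size at most `(1+2δ)·(np)^i`. -/
theorem stmt_14 (ε δ c : ℝ) (hε : ε ∈ Set.Ioo (0 : ℝ) 1) (hδ : 0 < δ) (hc : 0 < c) :
    ∀ᶠ n : ℕ in Filter.atTop, ∀ x : Fin n,
      ∃ hp : ENNReal.ofReal (c * Real.log n / (n : ℝ) ^ (1 - ε)) ≤ 1,
        1 - 1 / (n : ENNReal) ^ 3 ≤
          (Measure.pi fun _ : Sym2 (Fin n) =>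
              (PMF.bernoulli (Real.toNNReal (c * Real.log n / (n : ℝ) ^ (1 - ε)))
                (ENNReal.coe_le_one_iff.mp hp)).toMeasure)
            {ω | ∀ i : ℕ, 1 ≤ i →
              (({y : Fin n | (erdosRenyiGraph n ω).edist x y = (i : ℕ∞)} : Set (Fin n)).ncard : ℝ) ≤
                (1 + δ) * ((n : ℝ) * (c * Real.log n / (n : ℝ) ^ (1 - ε))) ^ (i : ℝ) ∧
              (({y : Fin n | (erdosRenyiGraph n ω).edist x y ≤ (i : ℕ∞)} : Set (Fin n)).ncard : ℝ) ≤
                (1 + 2 * δ) * ((n : ℝ) * (c * Real.log n / (n : ℝ) ^ (1 - ε))) ^ (i : ℝ)} := by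
  classical
  obtain ⟨hε0, hε1⟩ := hε
  set K : ℕ := ⌈1/ε⌉₊ + 1 with hKdef
  have hKpos : (1:ℝ) ≤ K := by
    have : 1 ≤ K := Nat.le_add_left 1 _
    exact_mod_cast this
  set d : ℝ := min δ 1 / (2*K) with hddef
  have hmin0 : 0 < min δ 1 := lt_min hδ one_pos
  have hd0 : 0 < d := div_pos hmin0 (by nlinarith)
  have hd1 : d ≤ 1 := by
    rw [hddef, div_le_one (by positivity)]
    have h1 : min δ 1 ≤ 1 := min_le_right _ _
    nlinarith
  have hdK : (1+d)^K ≤ 1 + δ := by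
    have hdKval : d * K = min δ 1 / 2 := by
      rw [hddef]
      field_simp
    have h1 : (1+d)^K ≤ exp (d*K) := by
      calc (1+d)^K ≤ (exp d)^K := by
            apply pow_le_pow_left₀ (by linarith)
            linarith [Real.add_one_le_exp d]
        _ = exp (d*K) := by rw [← Real.exp_nat_mul]; ring_nf
    have h2 : exp (min δ 1 / 2) ≤ 1 + min δ 1 := by
      have hb := Real.exp_bound' (x := min δ 1 / 2) (by positivity)
        (by nlinarith [min_le_right δ 1]) (n := 2) (by norm_num)
      norm_num [Finset.sum_range_succ] at hb
      nlinarith [min_le_right δ 1, hmin0]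
    rw [hdKval] at h1
    have h3 : 1 + min δ 1 ≤ 1 + δ := by
      have := min_le_left δ 1; linarith
    linarith
  have tlog : Filter.Tendsto (fun n : ℕ => c * Real.log n) Filter.atTop Filter.atTop :=
    (Real.tendsto_log_atTop.const_mul_atTop hc).comp tendsto_natCast_atTop_atTop
  have trpow : Filter.Tendsto (fun n : ℕ => (n:ℝ) ^ ε) Filter.atTop Filter.atTop :=
    (tendsto_rpow_atTop hε0).comp tendsto_natCast_atTop_atTop
  have hevent2 := tlog.eventually_ge_atTop (max 1 ((1+2*δ)/δ))
  have hevent3 := trpow.eventually_ge_atTop (max 1 (16/(d^2*c)))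
  have hevent4 : ∀ᶠ n : ℕ in Filter.atTop, c * Real.log n ≤ (n:ℝ) ^ (1-ε) := by
    have hlo := isLittleO_log_rpow_atTop (by linarith : (0:ℝ) < 1-ε)
    have hb := hlo.def (by positivity : (0:ℝ) < c⁻¹)
    have hbn := tendsto_natCast_atTop_atTop.eventually hb
    filter_upwards [hbn, Filter.eventually_ge_atTop 1] with n h h1
    have hn1 : (1:ℝ) ≤ n := by exact_mod_cast h1
    rw [Real.norm_eq_abs, Real.norm_eq_abs, abs_of_nonneg (Real.log_nonneg hn1),
      abs_of_nonneg (Real.rpow_nonneg (by linarith) _)] at h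
    calc c * Real.log n ≤ c * (c⁻¹ * (n:ℝ)^(1-ε)) := mul_le_mul_of_nonneg_left h hc.le
      _ = (n:ℝ)^(1-ε) := by field_simp
  filter_upwards [Filter.eventually_ge_atTop 3, hevent2, hevent3, hevent4]
    with n hn3 hlog hnε hple
  intro x
  have hn1R : (1:ℝ) ≤ n := by
    have : (3:ℝ) ≤ n := by exact_mod_cast hn3
    linarith
  have hnpos : (0:ℝ) < n := by linarith
  set p : ℝ := c * Real.log n / (n:ℝ)^(1-ε) with hpdef
  have hclog1 : (1:ℝ) ≤ c * Real.log n := le_trans (le_max_left _ _) hlog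
  have hclog2 : (1+2*δ)/δ ≤ c * Real.log n := le_trans (le_max_right _ _) hlog
  have hnε1 : (1:ℝ) ≤ (n:ℝ)^ε := le_trans (le_max_left _ _) hnε
  have hnε2 : 16/(d^2*c) ≤ (n:ℝ)^ε := le_trans (le_max_right _ _) hnε
  have hlogpos : 0 < Real.log n := by nlinarith
  have hp0 : 0 ≤ p := by
    rw [hpdef]
    have := Real.rpow_pos_of_pos hnpos (1-ε)
    positivity
  have hp1 : p ≤ 1 := by
    rw [hpdef, div_le_one (Real.rpow_pos_of_pos hnpos _)]
    exact hple
  have hnpeq : (n:ℝ) * p = (c * Real.log n) * (n:ℝ)^ε := by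
    have h1 : (n:ℝ) / (n:ℝ)^(1-ε) = (n:ℝ)^ε := by
      nth_rewrite 1 [← Real.rpow_one (n:ℝ)]
      rw [← Real.rpow_sub hnpos]
      norm_num
    calc (n:ℝ) * p = (c * Real.log n) * ((n:ℝ) / (n:ℝ)^(1-ε)) := by rw [hpdef]; ring
      _ = _ := by rw [h1]
  set np : ℝ := (n:ℝ) * p with hnpdef
  have hnp0 : 0 ≤ np := by
    rw [hnpeq]; positivity
  have hnp_ge : (1+2*δ)/δ ≤ np := by
    rw [hnpeq]
    nlinarith
  have hnp1 : 1 < np := by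
    have h1 : (1:ℝ) < (1+2*δ)/δ := by
      rw [lt_div_iff₀ hδ]; linarith
    linarith
  have h16 : 16 * Real.log n ≤ d^2 * np := by
    have h1 : 16 ≤ d^2 * c * (n:ℝ)^ε := by
      rw [div_le_iff₀ (by positivity)] at hnε2
      linarith
    rw [hnpeq]
    nlinarith [hlogpos.le]
  have hnK : (n:ℝ) ≤ np^K := by
    have h1 : (n:ℝ)^ε ≤ np := by
      rw [hnpeq]
      nlinarith [Real.rpow_nonneg (le_of_lt hnpos) ε]
    have hεK : 1 ≤ ε * K := by
      have hceil : 1/ε ≤ (⌈1/ε⌉₊ : ℝ) := Nat.le_ceil _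
      have hKcast : (K:ℝ) = (⌈1/ε⌉₊ : ℝ) + 1 := by rw [hKdef]; push_cast; ring
      have hinv : ε * (1/ε) = 1 := by field_simp
      nlinarith
    have h2 : (n:ℝ) ≤ ((n:ℝ)^ε)^K := by
      rw [← Real.rpow_natCast ((n:ℝ)^ε) K, ← Real.rpow_mul hnpos.le]
      calc (n:ℝ) = (n:ℝ)^(1:ℝ) := (Real.rpow_one _).symm
        _ ≤ (n:ℝ)^(ε * K) := Real.rpow_le_rpow_of_exponent_le hn1R hεK
    exact h2.trans (pow_le_pow_left₀ (Real.rpow_nonneg hnpos.le ε) h1 K)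
  have hp : ENNReal.ofReal p ≤ 1 := ENNReal.ofReal_le_one.mpr hp1
  refine ⟨hp, ?_⟩
  set μ := Measure.pi fun _ : Sym2 (Fin n) => (PMF.bernoulli (Real.toNNReal p) (ENNReal.coe_le_one_iff.mp hp)).toMeasure
    with hμdef
  set A : Set (Sym2 (Fin n) → Bool) := {ω | ∀ S : Finset (Fin n), S.Nonempty →
    (((cutF n S).filter (fun e => ω e = true)).card : ℝ) ≤ (1+d) * S.card * np} with hAdef
  -- deterministic inclusion
  have hsub : A ⊆ {ω | ∀ i : ℕ, 1 ≤ i →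
      (({y : Fin n | (erdosRenyiGraph n ω).edist x y = (i : ℕ∞)} : Set (Fin n)).ncard : ℝ) ≤
        (1 + δ) * np ^ (i : ℝ) ∧
      (({y : Fin n | (erdosRenyiGraph n ω).edist x y ≤ (i : ℕ∞)} : Set (Fin n)).ncard : ℝ) ≤
        (1 + 2 * δ) * np ^ (i : ℝ)} := by
    intro ω hω
    have hsph := sphere_bound ω x hd0.le hnp0 hω
    have hsph2 : ∀ i : ℕ,
        (({y : Fin n | (erdosRenyiGraph n ω).edist x y = (i : ℕ∞)} : Set (Fin n)).ncard : ℝ)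
          ≤ (1+δ) * np^i := by
      intro i
      rcases le_or_gt i K with hiK | hiK
      · calc (({y : Fin n | (erdosRenyiGraph n ω).edist x y = (i : ℕ∞)} : Set (Fin n)).ncard : ℝ)
            ≤ ((1+d)*np)^i := hsph i
          _ = (1+d)^i * np^i := mul_pow _ _ _
          _ ≤ (1+δ) * np^i := by
              apply mul_le_mul_of_nonneg_right _ (pow_nonneg hnp0 i)
              calc (1+d)^i ≤ (1+d)^K := pow_le_pow_right₀ (by linarith) hiK
                _ ≤ 1 + δ := hdK
      · have hcard_n :
            (({y : Fin n | (erdosRenyiGraph n ω).edist x y = (i : ℕ∞)} : Set (Fin n)).ncard : ℝ)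
              ≤ (n:ℝ) := by
          have h1 := Set.ncard_le_ncard
            (Set.subset_univ {y : Fin n | (erdosRenyiGraph n ω).edist x y = (i : ℕ∞)})
            Set.finite_univ
          rw [Set.ncard_univ, Nat.card_eq_fintype_card, Fintype.card_fin] at h1
          exact_mod_cast h1
        calc (({y : Fin n | (erdosRenyiGraph n ω).edist x y = (i : ℕ∞)} : Set (Fin n)).ncard : ℝ)
            ≤ (n:ℝ) := hcard_n
          _ ≤ np^K := hnK
          _ ≤ np^i := pow_le_pow_right₀ hnp1.le hiK.le
          _ ≤ (1+δ) * np^i := le_mul_of_one_le_left (pow_nonneg hnp0 i) (by linarith)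
    intro i hi
    constructor
    · rw [Real.rpow_natCast]
      exact hsph2 i
    · rw [Real.rpow_natCast]
      have hb := ball_ncard_le (erdosRenyiGraph n ω) x i
      have hbR : (({y : Fin n | (erdosRenyiGraph n ω).edist x y ≤ (i : ℕ∞)} : Set (Fin n)).ncard : ℝ)
          ≤ ∑ j ∈ Finset.range (i+1),
            (({y : Fin n | (erdosRenyiGraph n ω).edist x y = (j : ℕ∞)} : Set (Fin n)).ncard : ℝ) := by
        exact_mod_cast hb
      have hsum : ∑ j ∈ Finset.range (i+1),
            (({y : Fin n | (erdosRenyiGraph n ω).edist x y = (j : ℕ∞)} : Set (Fin n)).ncard : ℝ)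
          ≤ ∑ j ∈ Finset.range (i+1), (1+δ) * np^j :=
        Finset.sum_le_sum fun j _ => hsph2 j
      have hgeom : ∑ j ∈ Finset.range (i+1), np^j ≤ np^i * (np/(np-1)) := by
        rw [geom_sum_eq (by linarith : np ≠ 1)]
        rw [div_le_iff₀ (by linarith : (0:ℝ) < np - 1)]
        have hrw : np^i * (np/(np-1)) * (np-1) = np^(i+1) := by
          rw [mul_assoc, div_mul_cancel₀ _ (by linarith : np - 1 ≠ 0), pow_succ]
        rw [hrw, pow_succ]
        nlinarith [pow_nonneg hnp0 i]
      have hfin : (1+δ) * (np^i * (np/(np-1))) ≤ (1+2*δ) * np^i := by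
        have h2 : (1+δ) * (np/(np-1)) ≤ 1+2*δ := by
          rw [mul_div_assoc', div_le_iff₀ (by linarith : (0:ℝ) < np - 1)]
          have hδnp : 1 + 2*δ ≤ δ * np := by
            rw [div_le_iff₀ hδ] at hnp_ge
            linarith
          nlinarith
        calc (1+δ) * (np^i * (np/(np-1))) = ((1+δ) * (np/(np-1))) * np^i := by ring
          _ ≤ (1+2*δ) * np^i := mul_le_mul_of_nonneg_right h2 (pow_nonneg hnp0 i)
      calc (({y : Fin n | (erdosRenyiGraph n ω).edist x y ≤ (i : ℕ∞)} : Set (Fin n)).ncard : ℝ)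
          ≤ ∑ j ∈ Finset.range (i+1), (1+δ) * np^j := hbR.trans hsum
        _ = (1+δ) * ∑ j ∈ Finset.range (i+1), np^j := by rw [Finset.mul_sum]
        _ ≤ (1+δ) * (np^i * (np/(np-1))) := by
            apply mul_le_mul_of_nonneg_left hgeom (by linarith)
        _ ≤ (1+2*δ) * np^i := hfin
  -- probability bound
  set bad : Finset (Fin n) → Set (Sym2 (Fin n) → Bool) := fun S =>
    {ω | (1+d) * ((S.card : ℝ) * np) ≤ ∑ e ∈ cutF n S, (if ω e then (1:ℝ) else 0)} with hbaddef
  set 𝒮 : Finset (Finset (Fin n)) := Finset.univ.powerset.filter (fun S => S.Nonempty) with h𝒮def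
  have hAc : Aᶜ ⊆ ⋃ S ∈ 𝒮, bad S := by
    intro ω hω
    rw [hAdef] at hω
    simp only [Set.mem_compl_iff, Set.mem_setOf_eq, not_forall] at hω
    obtain ⟨S, hSne, hSgt⟩ := hω
    refine Set.mem_iUnion₂.mpr ⟨S,
      Finset.mem_filter.mpr ⟨Finset.mem_powerset.mpr (Finset.subset_univ S), hSne⟩, ?_⟩
    show (1+d) * ((S.card : ℝ) * np) ≤ ∑ e ∈ cutF n S, (if ω e then (1:ℝ) else 0)
    have hXcard : ∑ e ∈ cutF n S, (if ω e then (1:ℝ) else 0)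
        = (((cutF n S).filter (fun e => ω e = true)).card : ℝ) := Finset.sum_boole _ _
    rw [hXcard]
    push_neg at hSgt
    nlinarith [hSgt]
  have hbadS : ∀ S ∈ 𝒮, μ (bad S) ≤ ENNReal.ofReal (((n:ℝ)^(S.card + 4))⁻¹) := by
    intro S hS
    have hSne : S.Nonempty := (Finset.mem_filter.mp hS).2
    have hs1 : (1:ℝ) ≤ S.card := by exact_mod_cast Finset.card_pos.mpr hSne
    have hν0 : (0:ℝ) ≤ (S.card : ℝ) * np := by positivity
    have hmean : ((cutF n S).card : ℝ) * p ≤ (S.card : ℝ) * np := by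
      have h1 : ((cutF n S).card : ℝ) ≤ (S.card : ℝ) * n := by exact_mod_cast cutF_card_le n S
      calc ((cutF n S).card:ℝ) * p ≤ ((S.card : ℝ) * n) * p := mul_le_mul_of_nonneg_right h1 hp0
        _ = (S.card : ℝ) * np := by rw [hnpdef]; ring
    have hmeas := measure_pi_bernoulli_apply hp0 hp1 hp (bad S)
    have htail := chernoff_tail hp0 hp1 hd0 hd1 hν0 (cutF n S) hmean
    have hexp_le : exp (-(5/16 * (d^2 * ((S.card : ℝ) * np)))) ≤ ((n:ℝ)^(S.card + 4))⁻¹ := by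
      have hpowpos : (0:ℝ) < (n:ℝ)^(S.card+4) := by positivity
      rw [← Real.exp_log (inv_pos.mpr hpowpos), Real.exp_le_exp]
      have hlogpow : Real.log (((n:ℝ)^(S.card+4))⁻¹) = -(((S.card : ℝ) + 4) * Real.log n) := by
        rw [Real.log_inv, Real.log_pow]
        push_cast
        ring
      rw [hlogpow, neg_le_neg_iff]
      nlinarith [h16, hs1, hlogpos.le, hnp0]
    calc μ (bad S) = ∑ ω ∈ (Set.toFinite (bad S)).toFinset, ENNReal.ofReal (∏ e, wB p (ω e)) :=
          hmeas
      _ = ENNReal.ofReal (∑ ω ∈ (Set.toFinite (bad S)).toFinset, ∏ e, wB p (ω e)) := by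
          rw [ENNReal.ofReal_sum_of_nonneg]
          intro ω _
          exact Finset.prod_nonneg fun e _ => wB_nonneg hp0 hp1 _
      _ ≤ ENNReal.ofReal (exp (-(5/16 * (d^2 * ((S.card : ℝ) * np))))) :=
          ENNReal.ofReal_le_ofReal htail
      _ ≤ _ := ENNReal.ofReal_le_ofReal hexp_le
  have hrealsum : ∑ S ∈ 𝒮, ((n:ℝ)^(S.card + 4))⁻¹ ≤ ((n:ℝ)^3)⁻¹ := by
    have hterm : ∀ S : Finset (Fin n),
        ((n:ℝ)^(S.card + 4))⁻¹ = ((n:ℝ)⁻¹)^S.card * ((n:ℝ)⁻¹)^4 := by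
      intro S
      rw [pow_add, mul_inv, ← inv_pow, ← inv_pow]
    have hbinom : ∑ S ∈ (Finset.univ : Finset (Fin n)).powerset, ((n:ℝ)⁻¹)^S.card
        = ((n:ℝ)⁻¹ + 1)^n := by
      have h := Finset.prod_add (fun _ : Fin n => (n:ℝ)⁻¹) (fun _ => (1:ℝ)) Finset.univ
      simp only [Finset.prod_const, one_pow, mul_one, Finset.card_univ,
        Fintype.card_fin] at h
      exact h.symm
    have hmono : ∑ S ∈ 𝒮, ((n:ℝ)^(S.card + 4))⁻¹
        ≤ (∑ S ∈ (Finset.univ : Finset (Fin n)).powerset, ((n:ℝ)⁻¹)^S.card) * ((n:ℝ)⁻¹)^4 := by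
      rw [Finset.sum_mul]
      simp_rw [hterm]
      refine Finset.sum_le_sum_of_subset_of_nonneg ?_ fun S _ _ => by positivity
      rw [h𝒮def]
      exact Finset.filter_subset _ _
    have hexp3 : ((n:ℝ)⁻¹ + 1)^n ≤ 3 := by
      calc ((n:ℝ)⁻¹ + 1)^n ≤ (exp ((n:ℝ)⁻¹))^n :=
            pow_le_pow_left₀ (by positivity) (Real.add_one_le_exp _) n
        _ = exp ((n:ℕ) * (n:ℝ)⁻¹) := by rw [← Real.exp_nat_mul]
        _ = exp 1 := by rw [mul_inv_cancel₀ (by positivity : (n:ℝ) ≠ 0)]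
        _ ≤ 3 := by linarith [Real.exp_one_lt_d9]
    have hn3R : (3:ℝ) ≤ n := by exact_mod_cast hn3
    calc ∑ S ∈ 𝒮, ((n:ℝ)^(S.card + 4))⁻¹
        ≤ (((n:ℝ)⁻¹ + 1)^n) * ((n:ℝ)⁻¹)^4 := by rw [← hbinom]; exact hmono
      _ ≤ 3 * ((n:ℝ)⁻¹)^4 := mul_le_mul_of_nonneg_right hexp3 (by positivity)
      _ ≤ ((n:ℝ)^3)⁻¹ := by
          rw [inv_pow, inv_eq_one_div ((n:ℝ)^4), inv_eq_one_div ((n:ℝ)^3), mul_one_div,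
            div_le_div_iff₀ (by positivity) (by positivity)]
          nlinarith [pow_pos (by linarith : (0:ℝ) < (n:ℝ)) 3, hn3R]
  have hofReal3 : ENNReal.ofReal (((n:ℝ)^3)⁻¹) = 1 / (n : ENNReal)^3 := by
    rw [one_div, ENNReal.ofReal_inv_of_pos (by positivity),
      ENNReal.ofReal_pow (by positivity), ENNReal.ofReal_natCast]
  have hμAc : μ Aᶜ ≤ 1 / (n : ENNReal)^3 := by
    calc μ Aᶜ ≤ μ (⋃ S ∈ 𝒮, bad S) := measure_mono hAc
      _ ≤ ∑ S ∈ 𝒮, μ (bad S) := measure_biUnion_finset_le 𝒮 bad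
      _ ≤ ∑ S ∈ 𝒮, ENNReal.ofReal (((n:ℝ)^(S.card + 4))⁻¹) := Finset.sum_le_sum hbadS
      _ = ENNReal.ofReal (∑ S ∈ 𝒮, ((n:ℝ)^(S.card + 4))⁻¹) :=
          (ENNReal.ofReal_sum_of_nonneg fun S _ => by positivity).symm
      _ ≤ ENNReal.ofReal (((n:ℝ)^3)⁻¹) := ENNReal.ofReal_le_ofReal hrealsum
      _ = 1 / (n : ENNReal)^3 := hofReal3
  have h1le : (1:ENNReal) ≤ μ A + μ Aᶜ := by
    have h := measure_union_le (μ := μ) A Aᶜ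
    rwa [Set.union_compl_self, measure_univ] at h
  calc 1 - 1 / (n : ENNReal)^3 ≤ 1 - μ Aᶜ := tsub_le_tsub_left hμAc 1
    _ ≤ μ A := tsub_le_iff_right.mpr h1le
    _ ≤ _ := measure_mono hsub
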